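/- arXiv:1409.1465 — 4 statements merged into one kernel-verified Lean document; each statement's English description precedes it below -/
import Mathlib

section
/- Let R be an n × n² column-stochastic matrix, v a stochastic vector in ℝⁿ, and 0 ≤ α < 1/2. Then there is at most one stochastic vector x ∈ ℝⁿ satisfying x = α R (x ⊗ x) + (1 − α) v. -/
open Finset Matrix

def Stoch' {α : Type*} [Fintype α] (x : α → ℝ) : Prop :=
  (∀ i, 0 ≤ x i) ∧ ∑ i, x i = 1

def norm1 {α : Type*} [Fintype α] (x : α → ℝ) : ℝ := ∑ i, |x i|

def kron {α β : Type*} (a : α → ℝ) (b : β → ℝ) : α × β → ℝ := fun p => a p.1 * b p.2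

def kpow {n : ℕ} (x : Fin n → ℝ) (k : ℕ) : (Fin k → Fin n) → ℝ := fun f => ∏ i, x (f i)

def ColStoch {α β : Type*} [Fintype α] (R : Matrix α β ℝ) : Prop :=
  (∀ i j, 0 ≤ R i j) ∧ ∀ j, ∑ i, R i j = 1

theorem stmt4 {n : ℕ} (R : Matrix (Fin n) (Fin n × Fin n) ℝ) (hR : ColStoch R)
    (v : Fin n → ℝ) (hv : Stoch' v) (α : ℝ) (hα0 : 0 ≤ α) (hα : α < 1/2)
    (x y : Fin n → ℝ) (hx : Stoch' x) (hy : Stoch' y)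
    (hxe : x = fun i => α * R.mulVec (kron x x) i + (1 - α) * v i)
    (hye : y = fun i => α * R.mulVec (kron y y) i + (1 - α) * v i) :
    x = y := by
  obtain ⟨hR0, hR1⟩ := hR
  obtain ⟨hx0, hx1⟩ := hx
  obtain ⟨hy0, hy1⟩ := hy
  set D := ∑ i, |x i - y i| with hD
  have hD0 : 0 ≤ D := Finset.sum_nonneg fun i _ => abs_nonneg _
  have hdiff : ∀ i, x i - y i = α * ∑ p, R i p * (kron x x p - kron y y p) := by
    intro i
    have h1 := congrFun hxe i
    have h2 := congrFun hye i
    simp only [Matrix.mulVec, dotProduct] at h1 h2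
    rw [h1, h2]
    simp only [mul_sub, Finset.mul_sum, Finset.sum_sub_distrib]
    ring
  have habs : ∀ i, |x i - y i| ≤ α * ∑ p, R i p * |kron x x p - kron y y p| := by
    intro i
    rw [hdiff i, abs_mul, abs_of_nonneg hα0]
    apply mul_le_mul_of_nonneg_left _ hα0
    refine (Finset.abs_sum_le_sum_abs _ _).trans_eq ?_
    refine Finset.sum_congr rfl fun p _ => ?_
    rw [abs_mul, abs_of_nonneg (hR0 i p)]
  have hkron : ∑ p : Fin n × Fin n, |kron x x p - kron y y p| ≤ 2 * D := by
    have hle : ∀ p : Fin n × Fin n, |kron x x p - kron y y p| ≤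
        x p.1 * |x p.2 - y p.2| + |x p.1 - y p.1| * y p.2 := by
      intro p
      have h : kron x x p - kron y y p
          = x p.1 * (x p.2 - y p.2) + (x p.1 - y p.1) * y p.2 := by
        simp only [kron]; ring
      rw [h]
      refine (abs_add_le _ _).trans_eq ?_
      rw [abs_mul, abs_mul, abs_of_nonneg (hx0 _), abs_of_nonneg (hy0 _)]
    calc ∑ p : Fin n × Fin n, |kron x x p - kron y y p|
        ≤ ∑ p : Fin n × Fin n, (x p.1 * |x p.2 - y p.2| + |x p.1 - y p.1| * y p.2) :=
          Finset.sum_le_sum fun p _ => hle p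
      _ = 2 * D := by
          rw [Finset.sum_add_distrib, Fintype.sum_prod_type, Fintype.sum_prod_type]
          simp_rw [← Finset.mul_sum]
          rw [← Finset.sum_mul, hx1, one_mul]
          simp_rw [hy1, mul_one]
          ring
  have hsum : D ≤ α * (2 * D) := by
    calc D ≤ ∑ i, α * ∑ p, R i p * |kron x x p - kron y y p| :=
          Finset.sum_le_sum fun i _ => habs i
      _ = α * ∑ p : Fin n × Fin n, (∑ i, R i p) * |kron x x p - kron y y p| := by
          rw [← Finset.mul_sum, Finset.sum_comm]
          simp_rw [Finset.sum_mul]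
      _ = α * ∑ p : Fin n × Fin n, |kron x x p - kron y y p| := by
          simp_rw [hR1, one_mul]
      _ ≤ α * (2 * D) := by
          apply mul_le_mul_of_nonneg_left hkron hα0
  have hDz : D = 0 := by nlinarith
  funext i
  have := (Finset.sum_eq_zero_iff_of_nonneg (fun i _ => abs_nonneg (x i - y i))).mp hDz i (Finset.mem_univ i)
  have := abs_eq_zero.mp this
  linarith [this]
end

section
/- Let R be an n × n^{m−1} column-stochastic matrix, v a stochastic vector in ℝⁿ, and 0 ≤ α < 1/(m−1). Then there is at most one stochastic vector x ∈ ℝⁿ satisfying x = α R (x ⊗ ⋯ ⊗ x) + (1 − α) v, where the Kronecker product has m−1 factors. -/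
open Finset Matrix

def StochVec {α : Type*} [Fintype α] (x : α → ℝ) : Prop :=
  (∀ i, 0 ≤ x i) ∧ ∑ i, x i = 1

lemma kpow_nonneg {n k : ℕ} {x : Fin n → ℝ} (hx : ∀ i, 0 ≤ x i) (f : Fin k → Fin n) :
    0 ≤ kpow x k f := Finset.prod_nonneg fun i _ => hx (f i)

lemma kpow_sum {n : ℕ} {x : Fin n → ℝ} (hx : StochVec x) (k : ℕ) :
    ∑ f : Fin k → Fin n, kpow x k f = 1 := by
  have := (Fintype.sum_pow x k).symm
  simp only [kpow]
  rw [this, hx.2, one_pow]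

lemma kpow_diff {n : ℕ} {x y : Fin n → ℝ} (hx : StochVec x) (hy : StochVec y) (k : ℕ) :
    ∑ f : Fin k → Fin n, |kpow x k f - kpow y k f| ≤ k * ∑ i, |x i - y i| := by
  induction k with
  | zero => simp [kpow]
  | succ k ih =>
    have key : ∀ (a : Fin n) (f : Fin k → Fin n),
        kpow x (k+1) (Fin.cons a f) = x a * kpow x k f := by
      intro a f
      simp [kpow, Fin.prod_univ_succ]
    have keyy : ∀ (a : Fin n) (f : Fin k → Fin n),
        kpow y (k+1) (Fin.cons a f) = y a * kpow y k f := by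
      intro a f
      simp [kpow, Fin.prod_univ_succ]
    have hsum : ∑ f : Fin (k+1) → Fin n, |kpow x (k+1) f - kpow y (k+1) f|
        = ∑ p : Fin n × (Fin k → Fin n),
            |x p.1 * kpow x k p.2 - y p.1 * kpow y k p.2| := by
      rw [← (Fin.consEquiv (fun _ : Fin (k+1) => Fin n)).sum_comp
        (fun f => |kpow x (k+1) f - kpow y (k+1) f|)]
      refine Finset.sum_congr rfl fun p _ => ?_
      obtain ⟨a, f⟩ := p
      rw [show (Fin.consEquiv fun _ => Fin n) (a, f) = Fin.cons a f from rfl, key, keyy]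
    rw [hsum, Fintype.sum_prod_type]
    have hbd : ∀ (a : Fin n) (f : Fin k → Fin n),
        |x a * kpow x k f - y a * kpow y k f| ≤
          x a * |kpow x k f - kpow y k f| + |x a - y a| * kpow y k f := by
      intro a f
      have h1 : x a * kpow x k f - y a * kpow y k f
          = x a * (kpow x k f - kpow y k f) + (x a - y a) * kpow y k f := by ring
      rw [h1]
      calc |x a * (kpow x k f - kpow y k f) + (x a - y a) * kpow y k f|
          ≤ |x a * (kpow x k f - kpow y k f)| + |(x a - y a) * kpow y k f| := abs_add_le _ _
        _ = x a * |kpow x k f - kpow y k f| + |x a - y a| * kpow y k f := by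
            rw [abs_mul, abs_mul, abs_of_nonneg (hx.1 a),
              abs_of_nonneg (kpow_nonneg hy.1 f)]
    calc ∑ a, ∑ f : Fin k → Fin n, |x a * kpow x k f - y a * kpow y k f|
        ≤ ∑ a, ∑ f : Fin k → Fin n,
            (x a * |kpow x k f - kpow y k f| + |x a - y a| * kpow y k f) := by
          exact Finset.sum_le_sum fun a _ => Finset.sum_le_sum fun f _ => hbd a f
      _ = (∑ a, x a) * (∑ f : Fin k → Fin n, |kpow x k f - kpow y k f|)
          + (∑ a, |x a - y a|) * (∑ f : Fin k → Fin n, kpow y k f) := by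
          simp only [Finset.sum_add_distrib, ← Finset.mul_sum, ← Finset.sum_mul]
      _ ≤ 1 * (k * ∑ i, |x i - y i|) + (∑ a, |x a - y a|) * 1 := by
          rw [hx.2, kpow_sum hy]
          simp only [one_mul, mul_one]
          linarith [ih]
      _ = (k + 1 : ℕ) * ∑ i, |x i - y i| := by push_cast; ring

lemma colStoch_contract {a b : Type*} [Fintype a] [Fintype b]
    {R : Matrix a b ℝ} (hR : ColStoch R) (z : b → ℝ) :
    ∑ i, |R.mulVec z i| ≤ ∑ j, |z j| := by
  calc ∑ i, |R.mulVec z i| ≤ ∑ i, ∑ j, R i j * |z j| := by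
        refine Finset.sum_le_sum fun i _ => ?_
        calc |R.mulVec z i| = |∑ j, R i j * z j| := rfl
          _ ≤ ∑ j, |R i j * z j| := Finset.abs_sum_le_sum_abs _ _
          _ = ∑ j, R i j * |z j| := by
              refine Finset.sum_congr rfl fun j _ => ?_
              rw [abs_mul, abs_of_nonneg (hR.1 i j)]
    _ = ∑ j, (∑ i, R i j) * |z j| := by rw [Finset.sum_comm]; simp [Finset.sum_mul]
    _ = ∑ j, |z j| := by simp [hR.2]

theorem stmt5 {n m : ℕ} (hm : 2 ≤ m)
    (R : Matrix (Fin n) (Fin (m - 1) → Fin n) ℝ) (hR : ColStoch R)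
    (v : Fin n → ℝ) (hv : StochVec v)
    (α : ℝ) (hα0 : 0 ≤ α) (hα : α < 1 / ((m : ℝ) - 1))
    (x y : Fin n → ℝ) (hx : StochVec x) (hy : StochVec y)
    (hxe : x = fun i => α * R.mulVec (kpow x (m - 1)) i + (1 - α) * v i)
    (hye : y = fun i => α * R.mulVec (kpow y (m - 1)) i + (1 - α) * v i) :
    x = y := by
  set D := ∑ i, |x i - y i| with hD
  have hD0 : 0 ≤ D := Finset.sum_nonneg fun i _ => abs_nonneg _
  have hdiff : ∀ i, x i - y i =
      α * R.mulVec (fun f => kpow x (m-1) f - kpow y (m-1) f) i := by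
    intro i
    have hx' := congrFun hxe i
    have hy' := congrFun hye i
    rw [hx', hy']
    have : R.mulVec (fun f => kpow x (m-1) f - kpow y (m-1) f) i
        = R.mulVec (kpow x (m-1)) i - R.mulVec (kpow y (m-1)) i := by
      simp [Matrix.mulVec, dotProduct, mul_sub, Finset.sum_sub_distrib]
    rw [this]; ring
  have hcontr : D ≤ α * ((m - 1 : ℕ) * D) := by
    calc D = ∑ i, |α * R.mulVec (fun f => kpow x (m-1) f - kpow y (m-1) f) i| := by
          exact Finset.sum_congr rfl fun i _ => by rw [hdiff i]
      _ = α * ∑ i, |R.mulVec (fun f => kpow x (m-1) f - kpow y (m-1) f) i| := by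
          rw [Finset.mul_sum]
          exact Finset.sum_congr rfl fun i _ => by
            rw [abs_mul, abs_of_nonneg hα0]
      _ ≤ α * ∑ f : Fin (m-1) → Fin n, |kpow x (m-1) f - kpow y (m-1) f| := by
          exact mul_le_mul_of_nonneg_left (colStoch_contract hR _) hα0
      _ ≤ α * ((m - 1 : ℕ) * D) := by
          exact mul_le_mul_of_nonneg_left (kpow_diff hx hy (m-1)) hα0
  have hcast : ((m - 1 : ℕ) : ℝ) = (m : ℝ) - 1 := by
    have : 1 ≤ m := by omega
    push_cast [this]; ring
  have hm1 : (0 : ℝ) < (m : ℝ) - 1 := by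
    have : (2 : ℝ) ≤ (m : ℝ) := by exact_mod_cast hm
    linarith
  have hαm : α * ((m : ℝ) - 1) < 1 := by
    rw [lt_div_iff₀ hm1] at hα
    linarith
  have hDzero : D = 0 := by
    rw [hcast] at hcontr
    nlinarith
  funext i
  have : |x i - y i| = 0 := by
    have hle : |x i - y i| ≤ D := Finset.single_le_sum
      (f := fun i => |x i - y i|) (fun j _ => abs_nonneg _) (Finset.mem_univ i)
    have := abs_nonneg (x i - y i)
    linarith
  have := abs_eq_zero.mp this
  linarith
end

section
/- Let R be an n × n^{m−1} column-stochastic matrix, v stochastic, α < 1/(m−1), and x the unique stochastic solution. Define S(y) = (1/(m−1)) R (I ⊗ y^{⊗(m−2)} + y ⊗ I ⊗ y^{⊗(m−3)} + ⋯ + y^{⊗(m−2)} ⊗ I), a column-stochastic n × n matrix for stochastic y. If stochastic vectors x^{(k)} satisfy x^{(k+1)} = α S(x^{(k)}) x^{(k+1)} + (1−α) v, then ‖x^{(k)} − x‖₁ ≤ ((m−2)α/(1−α))^k ‖x^{(0)} − x‖₁. -/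
open Finset Matrix

def StochV {α : Type*} [Fintype α] (x : α → ℝ) : Prop :=
  (∀ i, 0 ≤ x i) ∧ ∑ i, x i = 1

noncomputable def Smat {n m : ℕ} (R : Matrix (Fin n) (Fin (m - 1) → Fin n) ℝ)
    (y : Fin n → ℝ) : Matrix (Fin n) (Fin n) ℝ :=
  fun i l => (1 / ((m : ℝ) - 1)) * ∑ p : Fin (m - 1), ∑ f : Fin (m - 1) → Fin n,
    R i f * (if f p = l then (1 : ℝ) else 0) * ∏ q ∈ Finset.univ.erase p, y (f q)

lemma sum_prod_pi {ι : Type*} [Fintype ι] [DecidableEq ι] {n : ℕ} (w : ι → Fin n → ℝ) :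
    ∑ f : ι → Fin n, ∏ q, w q (f q) = ∏ q, ∑ j, w q j := (Fintype.prod_sum w).symm

lemma norm1_contract {n : ℕ} {β : Type*} [Fintype β] {A : Matrix (Fin n) β ℝ}
    (hA : ColStoch A) (z : β → ℝ) : norm1 (A.mulVec z) ≤ norm1 z := by
  have h1 : ∀ i j, |A i j * z j| = A i j * |z j| := fun i j => by
    rw [abs_mul, abs_of_nonneg (hA.1 i j)]
  calc norm1 (A.mulVec z) = ∑ i, |∑ j, A i j * z j| := by
        simp [norm1, Matrix.mulVec, dotProduct]
    _ ≤ ∑ i, ∑ j, A i j * |z j| := by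
        refine Finset.sum_le_sum fun i _ => ?_
        calc |∑ j, A i j * z j| ≤ ∑ j, |A i j * z j| := Finset.abs_sum_le_sum_abs _ _
          _ = ∑ j, A i j * |z j| := Finset.sum_congr rfl fun j _ => h1 i j
    _ = ∑ j, (∑ i, A i j) * |z j| := by rw [Finset.sum_comm]; simp [Finset.sum_mul]
    _ = norm1 z := by simp [hA.2, norm1]

lemma prod_sub_prod_tele {ι : Type*} [LinearOrder ι] (s : Finset ι) (a b : ι → ℝ) :
    ∏ q ∈ s, a q - ∏ q ∈ s, b q =
      ∑ r ∈ s, (∏ q ∈ s.filter (· < r), a q) * (a r - b r) * ∏ q ∈ s.filter (r < ·), b q := by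
  induction s using Finset.induction_on_max with
  | empty => simp
  | insert c s hlt ih =>
    have hcs : c ∉ s := fun h => absurd (hlt c h) (lt_irrefl c)
    have h1 : (insert c s).filter (· < c) = s := by
      ext q
      simp only [Finset.mem_filter, Finset.mem_insert]
      constructor
      · rintro ⟨(rfl | hq), h⟩
        · exact absurd h (lt_irrefl _)
        · exact hq
      · exact fun hq => ⟨Or.inr hq, hlt q hq⟩
    have h2 : (insert c s).filter (c < ·) = ∅ := by
      ext q
      simp only [Finset.mem_filter, Finset.mem_insert, Finset.notMem_empty, iff_false]
      rintro ⟨(rfl | hq), h⟩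
      · exact absurd h (lt_irrefl _)
      · exact absurd h (not_lt_of_gt (hlt q hq))
    have h3 : ∀ r ∈ s, (insert c s).filter (· < r) = s.filter (· < r) := by
      intro r hr
      ext q
      simp only [Finset.mem_filter, Finset.mem_insert]
      constructor
      · rintro ⟨(rfl | hq), h⟩
        · exact absurd h (not_lt_of_gt (hlt r hr))
        · exact ⟨hq, h⟩
      · exact fun ⟨hq, h⟩ => ⟨Or.inr hq, h⟩
    have h4 : ∀ r ∈ s, (insert c s).filter (r < ·) = insert c (s.filter (r < ·)) := by
      intro r hr
      ext q
      simp only [Finset.mem_filter, Finset.mem_insert]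
      constructor
      · rintro ⟨(rfl | hq), h⟩
        · exact Or.inl rfl
        · exact Or.inr ⟨hq, h⟩
      · rintro (rfl | ⟨hq, h⟩)
        · exact ⟨Or.inl rfl, hlt r hr⟩
        · exact ⟨Or.inr hq, h⟩
    have hcf : ∀ r, c ∉ s.filter (r < ·) := fun r h => hcs (Finset.mem_of_mem_filter _ h)
    rw [Finset.sum_insert hcs, Finset.prod_insert hcs, Finset.prod_insert hcs, h1, h2]
    rw [Finset.sum_congr rfl fun r hr => by
      rw [h3 r hr, h4 r hr, Finset.prod_insert (hcf r)]]
    have hstep : ∑ r ∈ s, (∏ q ∈ s.filter (· < r), a q) * (a r - b r) *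
        (b c * ∏ q ∈ s.filter (r < ·), b q) =
        b c * ∑ r ∈ s, (∏ q ∈ s.filter (· < r), a q) * (a r - b r) *
        ∏ q ∈ s.filter (r < ·), b q := by
      rw [Finset.mul_sum]
      exact Finset.sum_congr rfl fun r _ => by ring
    rw [hstep, ← ih]
    simp only [Finset.prod_empty, mul_one]
    ring

lemma abs_prod_sub_prod {ι : Type*} [LinearOrder ι] (s : Finset ι) (a b : ι → ℝ)
    (ha : ∀ q, 0 ≤ a q) (hb : ∀ q, 0 ≤ b q) :
    |∏ q ∈ s, a q - ∏ q ∈ s, b q| ≤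
      ∑ r ∈ s, (∏ q ∈ s.filter (· < r), a q) * |a r - b r| * ∏ q ∈ s.filter (r < ·), b q := by
  rw [prod_sub_prod_tele]
  refine (Finset.abs_sum_le_sum_abs _ _).trans (Finset.sum_le_sum fun r _ => ?_)
  rw [abs_mul, abs_mul, abs_of_nonneg (Finset.prod_nonneg fun q _ => ha q),
    abs_of_nonneg (Finset.prod_nonneg fun q _ => hb q)]

lemma fac_sum {n M : ℕ} (x y : Fin n → ℝ) (hx : StochV x) (hy : StochV y)
    (p : Fin M) (r : Fin M) (hr : r ∈ Finset.univ.erase p) :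
    ∑ f : Fin M → Fin n, x (f p) *
      ((∏ q ∈ (Finset.univ.erase p).filter (· < r), y (f q)) * |y (f r) - x (f r)| *
        ∏ q ∈ (Finset.univ.erase p).filter (r < ·), x (f q)) = norm1 (y - x) := by
  set S1 := (Finset.univ.erase p).filter (· < r) with hS1
  set S3 := (Finset.univ.erase p).filter (r < ·) with hS3
  have hrp : r ≠ p := Finset.ne_of_mem_erase hr
  have hrS1 : r ∉ S1 := by simp [hS1]
  have hpS3 : p ∉ S3 := by simp [hS3]
  have hr_sd : r ∈ Finset.univ \ S1 := by simp [hrS1]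
  have hset : ((Finset.univ : Finset (Fin M)) \ S1).erase r = insert p S3 := by
    ext q
    simp only [hS1, hS3, Finset.mem_erase, Finset.mem_sdiff, Finset.mem_filter,
      Finset.mem_insert, Finset.mem_univ, true_and, and_true]
    simp only [Fin.lt_def, ← Fin.val_ne_iff]
    omega
  set w : Fin M → Fin n → ℝ :=
    fun q j => if q ∈ S1 then y j else if q = r then |y j - x j| else x j with hwd
  have hw : ∀ f : Fin M → Fin n, x (f p) *
      ((∏ q ∈ S1, y (f q)) * |y (f r) - x (f r)| * ∏ q ∈ S3, x (f q)) = ∏ q, w q (f q) := by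
    intro f
    rw [← Finset.prod_sdiff (Finset.subset_univ S1)]
    have hA : ∏ q ∈ S1, w q (f q) = ∏ q ∈ S1, y (f q) :=
      Finset.prod_congr rfl fun q hq => by simp [hwd, hq]
    have hB : ∏ q ∈ Finset.univ \ S1, w q (f q) =
        |y (f r) - x (f r)| * (x (f p) * ∏ q ∈ S3, x (f q)) := by
      rw [← Finset.mul_prod_erase _ _ hr_sd]
      have hwr : w r (f r) = |y (f r) - x (f r)| := by simp [hwd, hrS1]
      rw [hwr, hset, Finset.prod_insert hpS3]
      have hpS1 : p ∉ S1 := by simp [hS1]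
      have hwp : w p (f p) = x (f p) := by simp [hwd, hpS1, Ne.symm hrp]
      rw [hwp]
      have h3 : ∏ q ∈ S3, w q (f q) = ∏ q ∈ S3, x (f q) := by
        refine Finset.prod_congr rfl fun q hq => ?_
        have hq3 : q ∈ S3 := hq
        have hqS1 : q ∉ S1 := by
          simp only [hS1, hS3, Finset.mem_filter] at hq3 ⊢
          exact fun h => absurd h.2 (not_lt_of_gt hq3.2)
        have hqr : q ≠ r := by
          simp only [hS3, Finset.mem_filter] at hq3
          exact fun h => absurd hq3.2 (h ▸ lt_irrefl r)
        simp [hwd, hqS1, hqr]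
      rw [h3]
    rw [hA, hB]
    ring
  rw [Finset.sum_congr rfl fun f _ => hw f, sum_prod_pi w]
  rw [← Finset.mul_prod_erase _ _ (Finset.mem_univ r)]
  have h1 : ∑ j, w r j = norm1 (y - x) := by
    simp [hwd, hrS1, norm1]
  have h2 : ∏ q ∈ Finset.univ.erase r, ∑ j, w q j = 1 := by
    refine Finset.prod_eq_one fun q hq => ?_
    by_cases h1 : q ∈ S1
    · simp [hwd, h1, hy.2]
    · simp [hwd, h1, Finset.ne_of_mem_erase hq, hx.2]
  rw [h1, h2, mul_one]

lemma Smat_mulVec {n m : ℕ} (R : Matrix (Fin n) (Fin (m - 1) → Fin n) ℝ)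
    (z x : Fin n → ℝ) (i : Fin n) : (Smat R z).mulVec x i =
      (1/((m:ℝ)-1)) * ∑ p : Fin (m-1), ∑ f : Fin (m-1) → Fin n,
        R i f * x (f p) * ∏ q ∈ Finset.univ.erase p, z (f q) := by
  have hmv : (Smat R z).mulVec x i = ∑ l, Smat R z i l * x l := by
    simp [Matrix.mulVec, dotProduct]
  rw [hmv]
  simp only [Smat]
  have e1 : ∀ l, ((1/((m:ℝ)-1)) * ∑ p : Fin (m-1), ∑ f : Fin (m-1) → Fin n,
      R i f * (if f p = l then (1:ℝ) else 0) * ∏ q ∈ Finset.univ.erase p, z (f q)) * x l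
      = (1/((m:ℝ)-1)) * ∑ p : Fin (m-1), ∑ f : Fin (m-1) → Fin n,
        (R i f * (if f p = l then (1:ℝ) else 0) * ∏ q ∈ Finset.univ.erase p, z (f q)) * x l := by
    intro l
    rw [mul_assoc]
    congr 1
    rw [Finset.sum_mul]
    exact Finset.sum_congr rfl fun p _ => Finset.sum_mul _ _ _
  rw [Finset.sum_congr rfl fun l _ => e1 l, ← Finset.mul_sum]
  congr 1
  rw [Finset.sum_comm]
  refine Finset.sum_congr rfl fun p _ => ?_
  rw [Finset.sum_comm]
  refine Finset.sum_congr rfl fun f _ => ?_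
  have e2 : ∀ l, (R i f * (if f p = l then (1:ℝ) else 0) * ∏ q ∈ Finset.univ.erase p, z (f q)) * x l
      = if f p = l then R i f * x l * ∏ q ∈ Finset.univ.erase p, z (f q) else 0 := by
    intro l
    split <;> ring
  rw [Finset.sum_congr rfl fun l _ => e2 l, Finset.sum_ite_eq]
  simp

lemma Smat_colStoch {n m : ℕ} (hm : 2 ≤ m)
    (R : Matrix (Fin n) (Fin (m - 1) → Fin n) ℝ) (hR : ColStoch R)
    (y : Fin n → ℝ) (hy : StochV y) : ColStoch (Smat R y) := by
  have hc1 : (1:ℝ) ≤ (m:ℝ) - 1 := by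
    have : (2:ℝ) ≤ (m:ℝ) := by exact_mod_cast hm
    linarith
  have hc0 : (0:ℝ) < (m:ℝ) - 1 := by linarith
  have hMc : ((m - 1 : ℕ) : ℝ) = (m:ℝ) - 1 := by
    rw [Nat.cast_sub (by omega)]; norm_num
  constructor
  · intro i l
    refine mul_nonneg (by positivity) (Finset.sum_nonneg fun p _ =>
      Finset.sum_nonneg fun f _ => mul_nonneg (mul_nonneg (hR.1 i f) ?_)
        (Finset.prod_nonneg fun q _ => hy.1 _))
    split <;> norm_num
  · intro l
    have key : ∀ p : Fin (m-1), ∑ f : Fin (m-1) → Fin n,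
        (if f p = l then (1:ℝ) else 0) * ∏ q ∈ Finset.univ.erase p, y (f q) = 1 := by
      intro p
      have hstep : ∑ f : Fin (m-1) → Fin n,
          (if f p = l then (1:ℝ) else 0) * ∏ q ∈ Finset.univ.erase p, y (f q)
          = ∑ f : Fin (m-1) → Fin n, ∏ q,
            (fun q j => if q = p then (if j = l then (1:ℝ) else 0) else y j) q (f q) := by
        refine Finset.sum_congr rfl fun f _ => ?_
        rw [← Finset.mul_prod_erase Finset.univ _ (Finset.mem_univ p)]
        simp only [if_pos rfl]
        congr 1
        exact Finset.prod_congr rfl fun q hq => by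
          rw [if_neg (Finset.ne_of_mem_erase hq)]
      rw [hstep]
      refine (sum_prod_pi (fun q j => if q = p then (if j = l then (1:ℝ) else 0) else y j)).trans
        (Finset.prod_eq_one fun q _ => ?_)
      by_cases hq : q = p
      · simp [hq, Finset.sum_ite_eq']
      · simp [hq, hy.2]
    have hcol : ∑ i, Smat R y i l = (1/((m:ℝ)-1)) * ∑ p : Fin (m-1),
        ∑ f : Fin (m-1) → Fin n, (∑ i, R i f) *
          ((if f p = l then (1:ℝ) else 0) * ∏ q ∈ Finset.univ.erase p, y (f q)) := by
      simp only [Smat]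
      rw [← Finset.mul_sum]
      congr 1
      rw [Finset.sum_comm]
      refine Finset.sum_congr rfl fun p _ => ?_
      rw [Finset.sum_comm]
      refine Finset.sum_congr rfl fun f _ => ?_
      rw [Finset.sum_mul]
      exact Finset.sum_congr rfl fun i _ => by ring
    rw [hcol]
    simp only [hR.2, one_mul]
    rw [Finset.sum_congr rfl fun p _ => key p]
    simp only [Finset.sum_const, Finset.card_univ, Fintype.card_fin, nsmul_eq_mul, mul_one]
    rw [hMc]
    field_simp

lemma Smat_fix {n m : ℕ} (hm : 2 ≤ m)
    (R : Matrix (Fin n) (Fin (m - 1) → Fin n) ℝ) (x : Fin n → ℝ) :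
    (Smat R x).mulVec x = R.mulVec (kpow x (m-1)) := by
  have hc0 : (0:ℝ) < (m:ℝ) - 1 := by
    have : (2:ℝ) ≤ (m:ℝ) := by exact_mod_cast hm
    linarith
  have hMc : ((m - 1 : ℕ) : ℝ) = (m:ℝ) - 1 := by
    rw [Nat.cast_sub (by omega)]; norm_num
  funext i
  rw [Smat_mulVec]
  have e1 : ∀ p : Fin (m-1), ∑ f : Fin (m-1) → Fin n,
      R i f * x (f p) * ∏ q ∈ Finset.univ.erase p, x (f q)
      = ∑ f : Fin (m-1) → Fin n, R i f * ∏ q, x (f q) := by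
    intro p
    refine Finset.sum_congr rfl fun f _ => ?_
    rw [mul_assoc, Finset.mul_prod_erase Finset.univ (fun q => x (f q)) (Finset.mem_univ p)]
  rw [Finset.sum_congr rfl fun p _ => e1 p]
  simp only [Finset.sum_const, Finset.card_univ, Fintype.card_fin, nsmul_eq_mul]
  rw [hMc, ← mul_assoc, one_div_mul_cancel (ne_of_gt hc0), one_mul]
  simp [Matrix.mulVec, dotProduct, kpow]

lemma Smat_lip {n m : ℕ} (hm : 2 ≤ m)
    (R : Matrix (Fin n) (Fin (m - 1) → Fin n) ℝ) (hR : ColStoch R)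
    (x y : Fin n → ℝ) (hx : StochV x) (hy : StochV y) :
    norm1 ((Smat R y).mulVec x - (Smat R x).mulVec x) ≤ ((m:ℝ) - 2) * norm1 (y - x) := by
  have hc1 : (1:ℝ) ≤ (m:ℝ) - 1 := by
    have : (2:ℝ) ≤ (m:ℝ) := by exact_mod_cast hm
    linarith
  have hc0 : (0:ℝ) < (m:ℝ) - 1 := by linarith
  have h1c : (0:ℝ) ≤ 1/((m:ℝ)-1) := div_nonneg zero_le_one hc0.le
  have hMc : ((m - 1 : ℕ) : ℝ) = (m:ℝ) - 1 := by
    rw [Nat.cast_sub (by omega)]; norm_num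
  have hM2 : ((m - 1 - 1 : ℕ) : ℝ) = (m:ℝ) - 2 := by
    have h : m - 1 - 1 = m - 2 := by omega
    rw [h, Nat.cast_sub hm]; norm_num
  have hentry : ∀ i, ((Smat R y).mulVec x - (Smat R x).mulVec x) i =
      (1/((m:ℝ)-1)) * ∑ p : Fin (m-1), ∑ f : Fin (m-1) → Fin n,
        R i f * x (f p) * (∏ q ∈ Finset.univ.erase p, y (f q) -
          ∏ q ∈ Finset.univ.erase p, x (f q)) := by
    intro i
    rw [Pi.sub_apply, Smat_mulVec, Smat_mulVec, ← mul_sub]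
    congr 1
    rw [← Finset.sum_sub_distrib]
    refine Finset.sum_congr rfl fun p _ => ?_
    rw [← Finset.sum_sub_distrib]
    exact Finset.sum_congr rfl fun f _ => by ring
  calc norm1 ((Smat R y).mulVec x - (Smat R x).mulVec x)
      = ∑ i, |((Smat R y).mulVec x - (Smat R x).mulVec x) i| := rfl
    _ ≤ ∑ i, (1/((m:ℝ)-1)) * ∑ p : Fin (m-1), ∑ f : Fin (m-1) → Fin n,
        R i f * x (f p) * |∏ q ∈ Finset.univ.erase p, y (f q) -
          ∏ q ∈ Finset.univ.erase p, x (f q)| := by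
        refine Finset.sum_le_sum fun i _ => ?_
        rw [hentry i, abs_mul, abs_of_nonneg h1c]
        refine mul_le_mul_of_nonneg_left ?_ h1c
        refine (Finset.abs_sum_le_sum_abs _ _).trans (Finset.sum_le_sum fun p _ => ?_)
        refine (Finset.abs_sum_le_sum_abs _ _).trans (Finset.sum_le_sum fun f _ => ?_)
        rw [abs_mul, abs_of_nonneg (mul_nonneg (hR.1 i f) (hx.1 (f p)))]
    _ = (1/((m:ℝ)-1)) * ∑ p : Fin (m-1), ∑ f : Fin (m-1) → Fin n,
        x (f p) * |∏ q ∈ Finset.univ.erase p, y (f q) -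
          ∏ q ∈ Finset.univ.erase p, x (f q)| := by
        rw [← Finset.mul_sum]
        congr 1
        rw [Finset.sum_comm]
        refine Finset.sum_congr rfl fun p _ => ?_
        rw [Finset.sum_comm]
        refine Finset.sum_congr rfl fun f _ => ?_
        have : ∑ i, R i f * x (f p) * |∏ q ∈ Finset.univ.erase p, y (f q) -
            ∏ q ∈ Finset.univ.erase p, x (f q)| = (∑ i, R i f) *
            (x (f p) * |∏ q ∈ Finset.univ.erase p, y (f q) -
              ∏ q ∈ Finset.univ.erase p, x (f q)|) := by
          rw [Finset.sum_mul]
          exact Finset.sum_congr rfl fun i _ => by ring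
        rw [this, hR.2, one_mul]
    _ ≤ (1/((m:ℝ)-1)) * ∑ p : Fin (m-1), ∑ f : Fin (m-1) → Fin n,
        ∑ r ∈ Finset.univ.erase p, x (f p) *
          ((∏ q ∈ ((Finset.univ.erase p).filter (· < r)), y (f q)) * |y (f r) - x (f r)| *
            ∏ q ∈ ((Finset.univ.erase p).filter (r < ·)), x (f q)) := by
        refine mul_le_mul_of_nonneg_left
          (Finset.sum_le_sum fun p _ => Finset.sum_le_sum fun f _ => ?_) h1c
        rw [← Finset.mul_sum]
        refine mul_le_mul_of_nonneg_left ?_ (hx.1 (f p))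
        exact abs_prod_sub_prod (Finset.univ.erase p) (fun q => y (f q)) (fun q => x (f q))
          (fun q => hy.1 _) (fun q => hx.1 _)
    _ = (1/((m:ℝ)-1)) * ∑ p : Fin (m-1), ∑ r ∈ Finset.univ.erase p, ∑ f : Fin (m-1) → Fin n,
        x (f p) * ((∏ q ∈ ((Finset.univ.erase p).filter (· < r)), y (f q)) *
          |y (f r) - x (f r)| * ∏ q ∈ ((Finset.univ.erase p).filter (r < ·)), x (f q)) := by
        congr 1
        exact Finset.sum_congr rfl fun p _ => Finset.sum_comm
    _ = (1/((m:ℝ)-1)) * ∑ p : Fin (m-1), ∑ r ∈ Finset.univ.erase p, norm1 (y - x) := by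
        congr 1
        refine Finset.sum_congr rfl fun p _ => Finset.sum_congr rfl fun r hr => ?_
        exact fac_sum x y hx hy p r hr
    _ = ((m:ℝ) - 2) * norm1 (y - x) := by
        simp only [Finset.sum_const, Finset.card_erase_of_mem (Finset.mem_univ _),
          Finset.card_univ, Fintype.card_fin, nsmul_eq_mul]
        rw [hM2, hMc]
        field_simp

theorem stmt13 {n m : ℕ} (hm : 2 ≤ m)
    (R : Matrix (Fin n) (Fin (m - 1) → Fin n) ℝ) (hR : ColStoch R)
    (v : Fin n → ℝ) (hv : StochV v)
    (α : ℝ) (hα0 : 0 ≤ α) (hα : α < 1 / ((m : ℝ) - 1))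
    (x : Fin n → ℝ) (hx : StochV x)
    (hxe : x = fun i => α * R.mulVec (kpow x (m - 1)) i + (1 - α) * v i)
    (X : ℕ → (Fin n → ℝ)) (hXs : ∀ k, StochV (X k))
    (hrec : ∀ k, X (k + 1) = fun i =>
      α * (Smat R (X k)).mulVec (X (k + 1)) i + (1 - α) * v i) :
    (∀ y : Fin n → ℝ, StochV y → ColStoch (Smat R y)) ∧
    ∀ k, norm1 (X k - x) ≤ ((((m : ℝ) - 2) * α) / (1 - α)) ^ k * norm1 (X 0 - x) := by
  have hc1 : (1:ℝ) ≤ (m:ℝ) - 1 := by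
    have : (2:ℝ) ≤ (m:ℝ) := by exact_mod_cast hm
    linarith
  have hc0 : (0:ℝ) < (m:ℝ) - 1 := by linarith
  have hα1 : α < 1 := lt_of_lt_of_le hα (by rw [div_le_one hc0]; exact hc1)
  have h1α : (0:ℝ) < 1 - α := by linarith
  have hm2 : (0:ℝ) ≤ (m:ℝ) - 2 := by
    have : (2:ℝ) ≤ (m:ℝ) := by exact_mod_cast hm
    linarith
  have hrate0 : 0 ≤ (((m:ℝ) - 2) * α) / (1 - α) :=
    div_nonneg (mul_nonneg hm2 hα0) h1α.le
  refine ⟨fun y hy => Smat_colStoch hm R hR y hy, ?_⟩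
  have hkey : ∀ k, norm1 (X (k+1) - x) ≤ ((((m:ℝ) - 2) * α) / (1 - α)) * norm1 (X k - x) := by
    intro k
    set A := Smat R (X k) with hA
    have hAcs : ColStoch A := Smat_colStoch hm R hR (X k) (hXs k)
    have he : ∀ i, (X (k+1) - x) i =
        α * (A.mulVec (X (k+1) - x) i + (A.mulVec x - (Smat R x).mulVec x) i) := by
      intro i
      have h1 : X (k+1) i = α * A.mulVec (X (k+1)) i + (1-α) * v i := congrFun (hrec k) i
      have h2 : x i = α * (Smat R x).mulVec x i + (1-α) * v i := by
        rw [Smat_fix hm R x]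
        conv_lhs => rw [hxe]
      calc (X (k+1) - x) i
          = (α * A.mulVec (X (k+1)) i + (1-α) * v i) -
            (α * (Smat R x).mulVec x i + (1-α) * v i) := by
            rw [Pi.sub_apply, ← h1, ← h2]
        _ = α * (A.mulVec (X (k+1) - x) i + (A.mulVec x - (Smat R x).mulVec x) i) := by
            simp only [Matrix.mulVec_sub, Pi.sub_apply]
            ring
    have hb1 : norm1 (A.mulVec (X (k+1) - x)) ≤ norm1 (X (k+1) - x) :=
      norm1_contract hAcs _
    have hb2 : norm1 (A.mulVec x - (Smat R x).mulVec x) ≤ ((m:ℝ) - 2) * norm1 (X k - x) :=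
      Smat_lip hm R hR x (X k) hx (hXs k)
    have hsum : norm1 (X (k+1) - x) ≤
        α * (norm1 (X (k+1) - x) + ((m:ℝ) - 2) * norm1 (X k - x)) := by
      calc norm1 (X (k+1) - x)
          = ∑ i, |α * (A.mulVec (X (k+1) - x) i + (A.mulVec x - (Smat R x).mulVec x) i)| := by
            exact Finset.sum_congr rfl fun i _ => by rw [he i]
        _ = α * ∑ i, |A.mulVec (X (k+1) - x) i + (A.mulVec x - (Smat R x).mulVec x) i| := by
            rw [Finset.mul_sum]
            exact Finset.sum_congr rfl fun i _ => by rw [abs_mul, abs_of_nonneg hα0]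
        _ ≤ α * ∑ i, (|A.mulVec (X (k+1) - x) i| + |(A.mulVec x - (Smat R x).mulVec x) i|) :=
            mul_le_mul_of_nonneg_left (Finset.sum_le_sum fun i _ => abs_add_le _ _) hα0
        _ = α * (norm1 (A.mulVec (X (k+1) - x)) + norm1 (A.mulVec x - (Smat R x).mulVec x)) := by
            rw [Finset.sum_add_distrib]; rfl
        _ ≤ α * (norm1 (X (k+1) - x) + ((m:ℝ) - 2) * norm1 (X k - x)) :=
            mul_le_mul_of_nonneg_left (add_le_add hb1 hb2) hα0
    rw [div_mul_eq_mul_div, le_div_iff₀ h1α]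
    nlinarith [hsum]
  intro k
  induction k with
  | zero => simp
  | succ k ih =>
    calc norm1 (X (k+1) - x) ≤ ((((m:ℝ) - 2) * α) / (1 - α)) * norm1 (X k - x) := hkey k
      _ ≤ ((((m:ℝ) - 2) * α) / (1 - α)) *
          (((((m:ℝ) - 2) * α) / (1 - α)) ^ k * norm1 (X 0 - x)) :=
          mul_le_mul_of_nonneg_left ih hrate0
      _ = ((((m:ℝ) - 2) * α) / (1 - α)) ^ (k+1) * norm1 (X 0 - x) := by ring
end

section
/- Define the sequence f₁ = α(1−α)² and f_{k+1} = α f_k² / ((1−2α)² + 4α f_k) for 0 < α < 1/2. Then f_{k+1} ≤ f_k/4 for all k ≥ 1, hence f_k ≤ α(1−α)²/4^{k−1}, and lim_{k→∞} f_{k+1}/f_k² = α/(1−2α)², so the sequence converges to 0 quadratically in the limit. -/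
open Finset Matrix

open Filter Topology in
theorem stmt17 (α : ℝ) (hα0 : 0 < α) (hα : α < 1/2)
    (f : ℕ → ℝ) (h1 : f 1 = α * (1 - α) ^ 2)
    (hrec : ∀ k, 1 ≤ k → f (k + 1) = α * f k ^ 2 / ((1 - 2*α) ^ 2 + 4 * α * f k)) :
    (∀ k, 1 ≤ k → f (k + 1) ≤ f k / 4) ∧
    (∀ k, 1 ≤ k → f k ≤ α * (1 - α) ^ 2 / 4 ^ (k - 1)) ∧
    Tendsto (fun k => f (k + 1) / f k ^ 2) atTop (𝓝 (α / (1 - 2*α) ^ 2)) ∧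
    Tendsto f atTop (𝓝 0) := by
  have h2α : 0 < 1 - 2*α := by linarith
  have hpos : ∀ k, 1 ≤ k → 0 < f k := by
    intro k hk
    induction k with
    | zero => omega
    | succ n ih =>
      rcases Nat.eq_or_lt_of_le hk with h | h
      · have hn0 : n = 0 := by omega
        subst hn0
        have h1α : (0:ℝ) < 1 - α := by linarith
        rw [h1]
        exact mul_pos hα0 (pow_pos h1α 2)
      · have hn : 1 ≤ n := by omega
        have hfn := ih hn
        rw [hrec n hn]
        have hden : 0 < (1 - 2*α) ^ 2 + 4 * α * f n := by positivity
        positivity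
  have hq : ∀ k, 1 ≤ k → f (k + 1) ≤ f k / 4 := by
    intro k hk
    have hfk := hpos k hk
    rw [hrec k hk]
    rw [div_le_div_iff₀ (by positivity) (by norm_num)]
    nlinarith [sq_nonneg (1 - 2*α), sq_nonneg (f k)]
  have hdecay : ∀ k, 1 ≤ k → f k ≤ α * (1 - α) ^ 2 / 4 ^ (k - 1) := by
    intro k hk
    induction k with
    | zero => omega
    | succ n ih =>
      rcases Nat.eq_or_lt_of_le hk with h | h
      · have : n = 0 := by omega
        subst this
        simp [h1]
      · have hn : 1 ≤ n := by omega
        have := hq n hn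
        have h4 : (4:ℝ) ^ (n + 1 - 1) = 4 ^ (n - 1) * 4 := by
          rw [show n + 1 - 1 = (n - 1) + 1 by omega, pow_succ]
        calc f (n + 1) ≤ f n / 4 := hq n hn
          _ ≤ (α * (1 - α) ^ 2 / 4 ^ (n - 1)) / 4 := by
              have := ih hn; linarith
          _ = α * (1 - α) ^ 2 / 4 ^ (n + 1 - 1) := by
              rw [h4]; ring
  have hC : (0:ℝ) < α * (1 - α) ^ 2 := by
    have h1α : (0:ℝ) < 1 - α := by linarith
    exact mul_pos hα0 (pow_pos h1α 2)
  have htendsto0 : Tendsto f atTop (𝓝 0) := by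
    have hbound : Tendsto (fun k : ℕ => α * (1 - α) ^ 2 / 4 ^ (k - 1)) atTop (𝓝 0) := by
      have hsub : Tendsto (fun k : ℕ => k - 1) atTop atTop :=
        tendsto_sub_atTop_nat 1
      have hp : Tendsto (fun m : ℕ => ((1:ℝ)/4) ^ m) atTop (𝓝 0) :=
        tendsto_pow_atTop_nhds_zero_of_lt_one (by norm_num) (by norm_num)
      have := ((hp.comp hsub).const_mul (α * (1 - α) ^ 2))
      simp only [Function.comp] at this
      convert this.congr (fun k => ?_) using 1
      · simp
      · rw [div_pow, one_pow, mul_one_div]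
    refine squeeze_zero' ?_ ?_ hbound
    · filter_upwards [eventually_ge_atTop 1] with k hk using (hpos k hk).le
    · filter_upwards [eventually_ge_atTop 1] with k hk using hdecay k hk
  refine ⟨hq, hdecay, ?_, htendsto0⟩
  have heq : ∀ᶠ k in atTop, f (k + 1) / f k ^ 2 = α / ((1 - 2*α) ^ 2 + 4 * α * f k) := by
    filter_upwards [eventually_ge_atTop 1] with k hk
    have hfk := hpos k hk
    rw [hrec k hk]
    field_simp
  rw [tendsto_congr' heq]
  have hden : Tendsto (fun k => (1 - 2*α) ^ 2 + 4 * α * f k) atTop (𝓝 ((1 - 2*α) ^ 2)) := by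
    have := htendsto0.const_mul (4 * α)
    simpa using (tendsto_const_nhds.add this)
  exact tendsto_const_nhds.div hden (by positivity)
end
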